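/- If F ⊆ ℝ^d is compact with lower dimension dim_L F = 0, then the gallery G_F contains a singleton: there is a sequence of minisets of F converging in the Hausdorff metric to a one-point subset of [0,1]^d lying in the interior (0,1)^d. -/

import Mathlib

open Set Metric Filter Topology

/-- Smallest number of axis-parallel cubes of side length `r` (closed balls of radius `r/2`
in the sup metric on `Fin d → ℝ`) needed to cover `A`. -/
noncomputable def coverNum (d : ℕ) (A : Set (Fin d → ℝ)) (r : ℝ) : ℕ :=
  sInf {n : ℕ | ∃ t : Finset (Fin d → ℝ), t.card = n ∧ A ⊆ ⋃ x ∈ t, closedBall x (r / 2)}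

/-- The lower dimension. -/
noncomputable def lowerDim (d : ℕ) (F : Set (Fin d → ℝ)) : ℝ :=
  sSup {s : ℝ | 0 ≤ s ∧ ∃ C : ℝ, 0 < C ∧ ∀ R : ℝ, 0 < R → R < 1 → ∀ r : ℝ, 0 < r → r < R →
    ∀ x ∈ F, C * (R / r) ^ s ≤ (coverNum d (closedBall x R ∩ F) r : ℝ)}

/-- The Assouad dimension. -/
noncomputable def assouadDim (d : ℕ) (F : Set (Fin d → ℝ)) : ℝ :=
  sInf {s : ℝ | 0 ≤ s ∧ ∃ C : ℝ, 0 < C ∧ ∀ R : ℝ, 0 < R → ∀ r : ℝ, 0 < r → r < R →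
    ∀ x ∈ F, (coverNum d (closedBall x R ∩ F) r : ℝ) ≤ C * (R / r) ^ s}

/-- Upper box dimension. -/
noncomputable def ubDim (d : ℕ) (A : Set (Fin d → ℝ)) : ℝ :=
  Filter.limsup (fun r : ℝ => Real.log (coverNum d A r) / (-Real.log r)) (𝓝[>] (0:ℝ))

/-- Lower box dimension. -/
noncomputable def lbDim (d : ℕ) (A : Set (Fin d → ℝ)) : ℝ :=
  Filter.liminf (fun r : ℝ => Real.log (coverNum d A r) / (-Real.log r)) (𝓝[>] (0:ℝ))

/-- `D` is a miniset of `F`: `D = (λF + t) ∩ [0,1]^d` with `λ ≥ 1`, and `D` is nonempty. -/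
def IsMiniset (d : ℕ) (F D : Set (Fin d → ℝ)) : Prop :=
  ∃ lam : ℝ, 1 ≤ lam ∧ ∃ t : Fin d → ℝ,
    D = ((fun x => lam • x + t) '' F) ∩ Icc 0 1 ∧ D.Nonempty

/-- `E` is a microset of `F`: a Hausdorff-metric limit of minisets of `F`. -/
def IsMicroset (d : ℕ) (F E : Set (Fin d → ℝ)) : Prop :=
  IsCompact E ∧ E ⊆ Icc 0 1 ∧ ∃ D : ℕ → Set (Fin d → ℝ),
    (∀ n, IsMiniset d F (D n)) ∧
    Tendsto (fun n => hausdorffDist (D n) E) atTop (𝓝 0)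

/-- The gallery of `F`: microsets intersecting the interior of the unit cube. -/
def InGallery (d : ℕ) (F E : Set (Fin d → ℝ)) : Prop :=
  IsMicroset d F E ∧ (E ∩ interior (Icc (0 : Fin d → ℝ) 1)).Nonempty

/-- A compact set has some finite cover. -/
lemma coverset_nonempty (d : ℕ) {A : Set (Fin d → ℝ)} (hA : IsCompact A) {r : ℝ} (hr : 0 < r) :
    {n : ℕ | ∃ t : Finset (Fin d → ℝ), t.card = n ∧ A ⊆ ⋃ x ∈ t, closedBall x (r / 2)}.Nonempty := by
  obtain ⟨t, -, hfin, hcov⟩ := hA.finite_cover_balls (e := r/2) (by positivity)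
  refine ⟨hfin.toFinset.card, hfin.toFinset, rfl, hcov.trans ?_⟩
  refine iUnion₂_subset fun x hx => ?_
  exact subset_trans ball_subset_closedBall
    (subset_iUnion₂ (s := fun x _ => closedBall x (r/2)) x (hfin.mem_toFinset.2 hx))

/-- Separated sets give lower bounds on covering numbers. -/
lemma card_le_coverNum (d : ℕ) {A : Set (Fin d → ℝ)} (hA : IsCompact A) {r : ℝ} (hr : 0 < r)
    (T : Finset (Fin d → ℝ)) (hT : ↑T ⊆ A)
    (hsep : ∀ a ∈ T, ∀ b ∈ T, a ≠ b → r < dist a b) :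
    T.card ≤ coverNum d A r := by
  refine le_csInf (coverset_nonempty d hA hr) ?_
  rintro n ⟨t, rfl, hcov⟩
  have hg : ∀ a ∈ T, ∃ c ∈ t, a ∈ closedBall c (r/2) := by
    intro a ha
    have := hcov (hT ha)
    simpa using this
  choose g hg1 hg2 using hg
  refine Finset.card_le_card_of_injOn (fun a => if h : a ∈ T then g a h else a)
    (fun a ha => by simp only [Finset.mem_coe] at ha; simp only [dif_pos ha]; exact hg1 a ha) ?_
  intro a ha b hb hab
  simp only [Finset.mem_coe] at ha hb
  simp only [dif_pos ha, dif_pos hb] at hab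
  by_contra hne
  have h1 := mem_closedBall.1 (hg2 a ha)
  have h2 := mem_closedBall.1 (hg2 b hb)
  have : dist a b ≤ r := by
    calc dist a b ≤ dist a (g a ha) + dist (g b hb) b := by
          rw [hab]; exact dist_triangle _ _ _
    _ ≤ r/2 + r/2 := add_le_add h1 (by rwa [dist_comm])
    _ = r := by ring
  exact absurd this (not_le.2 (hsep a ha b hb hne))

/-- Grid upper bound. -/
lemma coverNum_le_grid (d : ℕ) (A : Set (Fin d → ℝ)) (x : Fin d → ℝ) {R r : ℝ}
    (hR : 0 < R) (hr : 0 < r) (hA : A ⊆ closedBall x R) :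
    coverNum d A r ≤ (⌈2*R/r⌉₊)^d := by
  set m : ℕ := ⌈2*R/r⌉₊ with hm
  have hm0 : 0 < m := Nat.ceil_pos.2 (by positivity)
  set f : (Fin d → Fin m) → (Fin d → ℝ) := fun k i => x i - R + r * (k i) + r/2 with hf
  have hcov : A ⊆ ⋃ c ∈ Finset.image f Finset.univ, closedBall c (r/2) := by
    intro z hz
    have hz' := hA hz
    have hzi : ∀ i, |z i - x i| ≤ R := by
      intro i
      have := (dist_le_pi_dist z x i).trans (mem_closedBall.1 hz')
      rwa [Real.dist_eq] at this
    set k : Fin d → Fin m := fun i =>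
      ⟨min ⌊(z i - x i + R)/r⌋₊ (m-1), lt_of_le_of_lt (min_le_right _ _) (Nat.sub_lt hm0 one_pos)⟩
      with hk
    refine mem_iUnion₂.2 ⟨f k, Finset.mem_image.2 ⟨k, Finset.mem_univ _, rfl⟩, ?_⟩
    rw [mem_closedBall]
    refine (dist_pi_le_iff (by positivity)).2 fun i => ?_
    set u := z i - x i + R with hu
    have hu0 : 0 ≤ u := by have := (abs_le.1 (hzi i)).1; simp [hu]; linarith
    have hu2R : u ≤ 2*R := by have := (abs_le.1 (hzi i)).2; simp [hu]; linarith
    set j := ⌊u/r⌋₊ with hj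
    have hkval : ((k i : ℕ) : ℝ) * r ≤ u ∧ u ≤ ((k i : ℕ) : ℝ) * r + r := by
      rcases le_or_gt j (m-1) with hc | hc
      · have hki : (k i : ℕ) = j := by exact min_eq_left hc
        rw [hki]
        constructor
        · have := Nat.floor_le (by positivity : (0:ℝ) ≤ u/r)
          rw [← hj] at this
          calc (j:ℝ) * r ≤ (u/r) * r := by nlinarith
            _ = u := by field_simp
        · have h := Nat.lt_floor_add_one (u/r)
          rw [← hj] at h
          have : u < ((j:ℝ)+1) * r := by
            have := (div_lt_iff₀ hr).1 h
            linarith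
          linarith
      · have hki : (k i : ℕ) = m - 1 := by exact min_eq_right hc.le
        have hjm : m ≤ j := by omega
        have h1 : (m:ℝ) * r ≤ u := by
          have := Nat.floor_le (by positivity : (0:ℝ) ≤ u/r)
          rw [← hj] at this
          have : (j:ℝ) ≤ u/r := this
          have hmj : (m:ℝ) ≤ (j:ℝ) := by exact_mod_cast hjm
          calc (m:ℝ) * r ≤ (j:ℝ) * r := by nlinarith
            _ ≤ (u/r) * r := by nlinarith
            _ = u := by field_simp
        have h2 : u ≤ (m:ℝ) * r := by
          have := Nat.le_ceil (2*R/r)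
          rw [← hm] at this
          have : 2*R ≤ (m:ℝ) * r := by
            calc 2*R = (2*R/r) * r := by field_simp
              _ ≤ (m:ℝ) * r := by nlinarith
          linarith
        rw [hki]
        have hm1 : ((m - 1 : ℕ) : ℝ) = (m:ℝ) - 1 := by
          have : (1:ℕ) ≤ m := hm0
          push_cast [Nat.cast_sub this]; ring
        rw [hm1]
        constructor
        · nlinarith
        · nlinarith
    have : f k i = x i - R + r * (k i) + r/2 := rfl
    rw [this, Real.dist_eq]
    rw [abs_le]
    obtain ⟨h1, h2⟩ := hkval
    constructor <;> [skip; skip] <;> simp only [hu] at h1 h2 <;> nlinarith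
  refine le_trans (Nat.sInf_le ⟨Finset.image f Finset.univ, rfl, hcov⟩) ?_
  calc (Finset.image f Finset.univ).card ≤ (Finset.univ : Finset (Fin d → Fin m)).card :=
        Finset.card_image_le
    _ = m ^ d := by simp [Finset.card_univ]

/-- Branching construction: uniform non-flatness gives exponentially many separated points. -/
lemma tree_lemma (d : ℕ) (F : Set (Fin d → ℝ)) {δ : ℝ} (hδ0 : 0 < δ) (hδ1 : δ < 1)
    (Hb : ∀ x ∈ F, ∀ ρ : ℝ, 0 < ρ → ρ ≤ 1/2 → ∃ y ∈ F, dist y x ≤ ρ ∧ δ * ρ < dist y x) :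
    ∀ n : ℕ, ∀ x ∈ F, ∀ ρ : ℝ, 0 < ρ → ρ ≤ 1/2 →
      ∃ T : Finset (Fin d → ℝ), T.card = 2^n ∧ ↑T ⊆ F ∧ (∀ a ∈ T, dist a x ≤ ρ) ∧
        (∀ a ∈ T, ∀ b ∈ T, a ≠ b → (δ/6)^n * ρ < dist a b) := by
  intro n
  induction n with
  | zero =>
    intro x hx ρ hρ0 hρ2
    exact ⟨{x}, by simp, by simpa using hx, by simp [hρ0.le],
      fun a ha b hb hab => absurd (by simp at ha hb; rw [ha, hb]) hab⟩
  | succ n IH =>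
    intro x hx ρ hρ0 hρ2
    obtain ⟨y, hyF, hy1, hy2⟩ := Hb x hx (ρ/2) (by positivity) (by linarith)
    set ρ' := (δ/6) * ρ with hρ'
    have hρ'0 : 0 < ρ' := by positivity
    have hρ'2 : ρ' ≤ 1/2 := by nlinarith
    obtain ⟨T₁, hc1, hF1, hd1, hs1⟩ := IH x hx ρ' hρ'0 hρ'2
    obtain ⟨T₂, hc2, hF2, hd2, hs2⟩ := IH y hyF ρ' hρ'0 hρ'2
    have hdisj : Disjoint T₁ T₂ := by
      rw [Finset.disjoint_left]
      intro a ha1 ha2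
      have h1 := hd1 a ha1
      have h2 := hd2 a ha2
      have : dist y x ≤ 2 * ρ' := by
        calc dist y x ≤ dist y a + dist a x := dist_triangle _ _ _
          _ ≤ ρ' + ρ' := add_le_add (by rw [dist_comm]; exact h2) h1
          _ = 2 * ρ' := by ring
      nlinarith
    refine ⟨T₁ ∪ T₂, ?_, ?_, ?_, ?_⟩
    · rw [Finset.card_union_of_disjoint hdisj, hc1, hc2]; ring
    · intro a ha
      rcases Finset.mem_union.1 (by simpa using ha) with h | h
      exacts [hF1 h, hF2 h]
    · intro a ha
      rcases Finset.mem_union.1 ha with h | h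
      · exact (hd1 a h).trans (by nlinarith)
      · calc dist a x ≤ dist a y + dist y x := dist_triangle _ _ _
          _ ≤ ρ' + ρ/2 := add_le_add (hd2 a h) hy1
          _ ≤ ρ := by nlinarith
    · have key : ∀ a ∈ T₁, ∀ b ∈ T₂, (δ/6)^(n+1) * ρ < dist a b := by
        intro a ha b hb
        have h1 := hd1 a ha
        have h2 := hd2 b hb
        have htri : dist y x ≤ dist y b + dist b a + dist a x := by
          calc dist y x ≤ dist y b + dist b x := dist_triangle _ _ _
            _ ≤ dist y b + (dist b a + dist a x) := by linarith [dist_triangle b a x]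
            _ = dist y b + dist b a + dist a x := by ring
        have hba : δ * ρ / 2 - 2 * ρ' < dist b a := by
          have h2' : dist y b ≤ ρ' := by rw [dist_comm]; exact h2
          nlinarith
        have hpow : (δ/6)^(n+1) ≤ δ/6 := by
          have h1 : (δ/6)^(n+1) ≤ (δ/6)^1 :=
            pow_le_pow_of_le_one (by positivity) (by linarith) (by omega)
          simpa using h1
        have : (δ/6)^(n+1) * ρ ≤ (δ/6) * ρ := by nlinarith
        have heq : δ * ρ / 2 - 2 * ρ' = (δ/6) * ρ := by rw [hρ']; ring
        rw [dist_comm b a] at hba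
        linarith
      intro a ha b hb hab
      rcases Finset.mem_union.1 ha with h1 | h1 <;> rcases Finset.mem_union.1 hb with h2 | h2
      · calc (δ/6)^(n+1) * ρ = (δ/6)^n * ρ' := by rw [hρ']; ring
          _ < dist a b := hs1 a h1 b h2 hab
      · exact key a h1 b h2
      · rw [dist_comm]; exact key b h2 a h1
      · calc (δ/6)^(n+1) * ρ = (δ/6)^n * ρ' := by rw [hρ']; ring
          _ < dist a b := hs2 a h1 b h2 hab

lemma mem_S_of_branching (d : ℕ) (F : Set (Fin d → ℝ)) (hF : IsCompact F) {δ : ℝ}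
    (hδ0 : 0 < δ) (hδ1 : δ < 1)
    (Hb : ∀ x ∈ F, ∀ ρ : ℝ, 0 < ρ → ρ ≤ 1/2 → ∃ y ∈ F, dist y x ≤ ρ ∧ δ * ρ < dist y x) :
    ∃ s : ℝ, 0 < s ∧ ∃ C : ℝ, 0 < C ∧ ∀ R : ℝ, 0 < R → R < 1 → ∀ r : ℝ, 0 < r → r < R →
      ∀ x ∈ F, C * (R / r) ^ s ≤ (coverNum d (closedBall x R ∩ F) r : ℝ) := by
  set c : ℝ := δ/6 with hc
  have hc0 : 0 < c := by positivity
  have hc1 : c < 1 := by rw [hc]; linarith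
  have hlc : 0 < -Real.log c := by
    have := Real.log_neg hc0 hc1; linarith
  set s : ℝ := Real.log 2 / (-Real.log c) with hs
  have hs0 : 0 < s := div_pos (Real.log_pos one_lt_two) hlc
  set C : ℝ := (1/2) * (1/2 : ℝ) ^ s with hC
  have hC0 : 0 < C := by
    have : (0:ℝ) < (1/2 : ℝ) ^ s := Real.rpow_pos_of_pos (by norm_num) s
    positivity
  refine ⟨s, hs0, C, hC0, ?_⟩
  intro R hR0 hR1 r hr0 hrR x hxF
  set ρ : ℝ := R/2 with hρ
  have hρ0 : 0 < ρ := by positivity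
  have hρ2 : ρ ≤ 1/2 := by rw [hρ]; linarith
  have hcomp : IsCompact (closedBall x R ∩ F) := hF.inter_left isClosed_closedBall
  have hCR : C * (R / r) ^ s = (1/2) * (ρ / r) ^ s := by
    rw [hC, mul_assoc, ← Real.mul_rpow (by norm_num) (by positivity)]
    congr 2
    rw [hρ]; ring
  rcases le_or_gt ρ r with hcase | hcase
  · -- trivial case : one cube needed
    have h1 : (1 : ℕ) ≤ coverNum d (closedBall x R ∩ F) r := by
      have := card_le_coverNum d hcomp hr0 {x}
        (by intro a ha; simp at ha; subst ha; exact ⟨mem_closedBall_self hR0.le, hxF⟩)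
        (fun a ha b hb hab => absurd (by simp at ha hb; rw [ha, hb]) hab)
      simpa using this
    have hy1 : (ρ / r) ^ s ≤ 1 := by
      have : ρ / r ≤ 1 := by rw [div_le_one hr0]; exact hcase
      calc (ρ/r) ^ s ≤ (1:ℝ) ^ s := Real.rpow_le_rpow (by positivity) this hs0.le
        _ = 1 := Real.one_rpow s
    rw [hCR]
    have h2 : (1:ℝ) ≤ (coverNum d (closedBall x R ∩ F) r : ℝ) := by exact_mod_cast h1
    linarith
  · -- main case
    set y : ℝ := ρ / r with hy
    have hy1 : 1 < y := by rw [hy, lt_div_iff₀ hr0]; linarith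
    have hinv1 : 1 < 1/c := by rw [lt_div_iff₀ hc0]; linarith
    set L : ℝ := Real.logb (1/c) y with hL
    have hL0 : 0 < L := Real.logb_pos hinv1 hy1
    set n : ℕ := ⌊L⌋₊ with hn
    have hn1 : (n:ℝ) ≤ L := Nat.floor_le hL0.le
    have hn2 : L < (n:ℝ) + 1 := Nat.lt_floor_add_one L
    -- (a) r ≤ c^n * ρ
    have hcn : (0:ℝ) < c^n := pow_pos hc0 n
    have ha : r ≤ c^n * ρ := by
      have h1 : ((1/c) ^ n : ℝ) ≤ y := by
        have : ((1/c):ℝ) ^ (n:ℝ) ≤ (1/c) ^ L :=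
          Real.rpow_le_rpow_of_exponent_le hinv1.le hn1
        rw [Real.rpow_logb (by positivity) (ne_of_gt hinv1) (by positivity)] at this
        rwa [Real.rpow_natCast] at this
      rw [one_div_pow] at h1
      rw [div_le_div_iff₀ hcn hr0] at h1  -- 1/c^n ≤ ρ/r
      nlinarith
    -- tree
    obtain ⟨T, hcard, hTF, hTd, hTs⟩ := tree_lemma d F hδ0 hδ1 Hb n x hxF ρ hρ0 hρ2
    have hcov : (2:ℝ)^n ≤ (coverNum d (closedBall x R ∩ F) r : ℝ) := by
      have := card_le_coverNum d hcomp hr0 T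
        (fun a haT => ⟨mem_closedBall.2 ((hTd a haT).trans (by rw [hρ]; linarith)), hTF haT⟩)
        (fun a haT b hbT hab => lt_of_le_of_lt (by rw [← hc]; nlinarith [hTs a haT b hbT hab])
          (hTs a haT b hbT hab))
      rw [hcard] at this
      exact_mod_cast this
    -- (b) y^s ≤ 2^(n+1)
    have hys : y ^ s = (2:ℝ) ^ L := by
      rw [Real.rpow_def_of_pos (by positivity), Real.rpow_def_of_pos two_pos]
      congr 1
      rw [hL, Real.logb, hs, one_div, Real.log_inv]
      rw [div_eq_mul_inv, div_eq_mul_inv]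
      ring
    have hb2 : y ^ s ≤ (2:ℝ) ^ ((n:ℝ)+1) := by
      rw [hys]
      exact Real.rpow_le_rpow_of_exponent_le one_le_two hn2.le
    have hb3 : (2:ℝ) ^ ((n:ℝ)+1) = 2 * (2:ℝ)^n := by
      rw [show ((n:ℝ)+1) = ((n+1 : ℕ):ℝ) by push_cast; ring, Real.rpow_natCast, pow_succ]
      ring
    rw [hCR]
    calc (1/2) * (ρ/r) ^ s = (1/2) * y ^ s := by rw [hy]
      _ ≤ (1/2) * (2 * (2:ℝ)^n) := by rw [← hb3]; nlinarith
      _ = (2:ℝ)^n := by ring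
      _ ≤ _ := hcov

lemma no_large_exponent (d : ℕ) (F : Set (Fin d → ℝ)) (hne : F.Nonempty) {s₁ C₁ : ℝ}
    (hs : (d:ℝ) < s₁) (hC : 0 < C₁)
    (h : ∀ R : ℝ, 0 < R → R < 1 → ∀ r : ℝ, 0 < r → r < R →
      ∀ x ∈ F, C₁ * (R / r) ^ s₁ ≤ (coverNum d (closedBall x R ∩ F) r : ℝ)) : False := by
  obtain ⟨x₀, hx₀⟩ := hne
  have htend : Tendsto (fun q : ℝ => C₁ * q ^ (s₁ - (d:ℝ))) atTop atTop :=
    (tendsto_rpow_atTop (by linarith)).const_mul_atTop hC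
  obtain ⟨q, hq4, hq2⟩ := ((htend.eventually_gt_atTop ((4:ℝ)^d)).and (eventually_ge_atTop 2)).exists
  have hq0 : (0:ℝ) < q := by linarith
  set r : ℝ := 1/(2*q) with hr
  have hr0 : 0 < r := by positivity
  have hrR : r < 1/2 := by
    rw [hr, div_lt_div_iff₀ (by positivity) (by norm_num)]
    linarith
  have hRr : (1/2 : ℝ) / r = q := by rw [hr]; field_simp
  have hmain := h (1/2) (by norm_num) (by norm_num) r hr0 hrR x₀ hx₀
  rw [hRr] at hmain
  -- upper bound via grid
  have hgrid := coverNum_le_grid d (closedBall x₀ (1/2) ∩ F) x₀ (by norm_num : (0:ℝ) < 1/2) hr0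
    inter_subset_left
  have h2q : 2 * (1/2 : ℝ) / r = 2 * q := by rw [hr]; field_simp
  rw [h2q] at hgrid
  set m : ℕ := ⌈(2:ℝ)*q⌉₊ with hm
  have hmle : (m:ℝ) ≤ 4 * q := by
    have := Nat.ceil_lt_add_one (by positivity : (0:ℝ) ≤ 2*q)
    rw [← hm] at this
    linarith
  have hcast : (coverNum d (closedBall x₀ (1/2) ∩ F) r : ℝ) ≤ (4*q)^d := by
    calc (coverNum d (closedBall x₀ (1/2) ∩ F) r : ℝ) ≤ ((m^d : ℕ) : ℝ) := by exact_mod_cast hgrid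
      _ = ((m:ℝ))^d := by push_cast; ring
      _ ≤ (4*q)^d := pow_le_pow_left₀ (by positivity) hmle d
  have hq1 : C₁ * q ^ s₁ ≤ (4*q)^d := le_trans hmain hcast
  have hsplit : q ^ s₁ = q ^ (s₁ - (d:ℝ)) * q ^ (d:ℕ) := by
    rw [← Real.rpow_natCast q d, ← Real.rpow_add hq0]
    congr 1; ring
  rw [hsplit, mul_pow] at hq1
  have hqd : (0:ℝ) < q ^ (d:ℕ) := by positivity
  have : C₁ * q ^ (s₁ - (d:ℝ)) ≤ (4:ℝ)^d := by
    rw [← mul_le_mul_iff_of_pos_right hqd]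
    calc C₁ * q ^ (s₁ - (d:ℝ)) * q^(d:ℕ) = C₁ * (q ^ (s₁ - (d:ℝ)) * q^(d:ℕ)) := by ring
      _ ≤ (4:ℝ)^d * q^(d:ℕ) := hq1
  linarith


/-- The one-ε miniset construction. -/
lemma miniset_construction (d : ℕ) (F : Set (Fin d → ℝ)) {ε : ℝ} (hε : 0 < ε)
    {x : Fin d → ℝ} (hx : x ∈ F) {ρ : ℝ} (hρ0 : 0 < ρ) (hρ2 : ρ ≤ 1/2)
    (hsmall : ∀ y ∈ F, dist y x ≤ ρ → dist y x ≤ ε * ρ) :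
    ∃ D : Set (Fin d → ℝ), IsMiniset d F D ∧
      hausdorffDist D {(fun _ => 1/2 : Fin d → ℝ)} ≤ ε/2 := by
  set c : Fin d → ℝ := fun _ => 1/2 with hcdef
  set lam : ℝ := 1/(2*ρ) with hlam
  have hlam0 : 0 < lam := by positivity
  have hlam1 : 1 ≤ lam := by
    rw [hlam, le_div_iff₀ (by positivity)]
    linarith
  have hlamρ : lam * ρ = 1/2 := by rw [hlam]; field_simp
  set t : Fin d → ℝ := c - lam • x with ht
  set D : Set (Fin d → ℝ) := ((fun z => lam • z + t) '' F) ∩ Icc 0 1 with hD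
  have hcx : lam • x + t = c := by rw [ht]; abel
  have hcIcc : c ∈ Icc (0 : Fin d → ℝ) 1 := by
    constructor <;> (intro i; simp [hcdef]; try norm_num)
  have hcD : c ∈ D := ⟨⟨x, hx, hcx⟩, hcIcc⟩
  have hDsub : ∀ z ∈ D, dist z c ≤ ε/2 := by
    rintro z ⟨⟨w, hwF, rfl⟩, hzI⟩
    have hdist : dist (lam • w + t) c = lam * dist w x := by
      rw [← hcx, dist_add_right, dist_eq_norm, ← smul_sub, norm_smul, dist_eq_norm]
      simp [abs_of_pos hlam0]
    have hhalf : dist (lam • w + t) c ≤ 1/2 := by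
      refine (dist_pi_le_iff (by norm_num)).2 fun i => ?_
      have h1 := hzI.1 i
      have h2 := hzI.2 i
      simp only [Pi.add_apply, Pi.smul_apply, smul_eq_mul, Pi.zero_apply, Pi.one_apply] at h1 h2
      rw [Real.dist_eq]
      have hci : c i = 1/2 := rfl
      rw [hci, abs_le]
      constructor <;> simp only [Pi.add_apply, Pi.smul_apply, smul_eq_mul] <;> linarith
    have hwx : dist w x ≤ ρ := by
      rw [hdist] at hhalf
      have h' : lam * dist w x ≤ lam * ρ := by rw [hlamρ]; exact hhalf
      exact le_of_mul_le_mul_left h' hlam0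
    have := hsmall w hwF hwx
    rw [hdist]
    calc lam * dist w x ≤ lam * (ε * ρ) := by nlinarith
      _ = ε/2 := by rw [mul_comm ε ρ, ← mul_assoc, hlamρ]; ring
  refine ⟨D, ⟨lam, hlam1, t, rfl, ⟨c, hcD⟩⟩, ?_⟩
  refine hausdorffDist_le_of_mem_dist (r := ε/2) (by linarith) ?_ ?_
  · intro z hz
    exact ⟨c, rfl, hDsub z hz⟩
  · rintro y rfl
    exact ⟨c, hcD, by rw [dist_self]; linarith⟩

/-- If a nonempty compact set has lower dimension zero, then its gallery contains a singleton:
a one-point microset lying in the interior of the unit cube. -/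
theorem stmt8 (d : ℕ) (F : Set (Fin d → ℝ)) (hF : IsCompact F) (hne : F.Nonempty)
    (h0 : lowerDim d F = 0) :
    ∃ x : Fin d → ℝ, x ∈ interior (Icc (0 : Fin d → ℝ) 1) ∧ IsMicroset d F {x} := by
  classical
  set c : Fin d → ℝ := fun _ => 1/2 with hc
  have Cl : ∀ ε : ℝ, 0 < ε → ∃ x ∈ F, ∃ ρ : ℝ, 0 < ρ ∧ ρ ≤ 1/2 ∧
      ∀ y ∈ F, dist y x ≤ ρ → dist y x ≤ ε * ρ := by
    intro ε hε
    by_contra hcon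
    push_neg at hcon
    set δ : ℝ := min ε (1/2) with hδ
    have hδ0 : 0 < δ := lt_min hε (by norm_num)
    have hδ1 : δ < 1 := lt_of_le_of_lt (min_le_right _ _) (by norm_num)
    have Hb : ∀ x ∈ F, ∀ ρ : ℝ, 0 < ρ → ρ ≤ 1/2 →
        ∃ y ∈ F, dist y x ≤ ρ ∧ δ * ρ < dist y x := by
      intro x hx ρ h1 h2
      obtain ⟨y, hyF, hy1, hy2⟩ := hcon x hx ρ h1 h2
      refine ⟨y, hyF, hy1, lt_of_le_of_lt ?_ hy2⟩
      have := min_le_left ε (1/2)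
      rw [hδ]; nlinarith
    obtain ⟨s, hs0, C, hC0, hmem⟩ := mem_S_of_branching d F hF hδ0 hδ1 Hb
    by_cases hbdd : BddAbove {s : ℝ | 0 ≤ s ∧ ∃ C : ℝ, 0 < C ∧ ∀ R : ℝ, 0 < R → R < 1 →
        ∀ r : ℝ, 0 < r → r < R →
        ∀ x ∈ F, C * (R / r) ^ s ≤ (coverNum d (closedBall x R ∩ F) r : ℝ)}
    · have hle : s ≤ lowerDim d F := le_csSup hbdd ⟨hs0.le, C, hC0, hmem⟩
      rw [h0] at hle
      linarith
    · obtain ⟨s₁, hs₁mem, hs₁⟩ := not_bddAbove_iff.1 hbdd (d:ℝ)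
      obtain ⟨-, C₁, hC₁0, hmem₁⟩ := hs₁mem
      exact no_large_exponent d F hne hs₁ hC₁0 hmem₁
  have hε' : ∀ n : ℕ, (0:ℝ) < 1/((n:ℝ)+1) := fun n => by positivity
  have hDs : ∀ n : ℕ, ∃ D : Set (Fin d → ℝ), IsMiniset d F D ∧
      hausdorffDist D {c} ≤ 1/((n:ℝ)+1) := by
    intro n
    obtain ⟨x, hx, ρ, h1, h2, h3⟩ := Cl (1/((n:ℝ)+1)) (hε' n)
    obtain ⟨D, hD1, hD2⟩ := miniset_construction d F (hε' n) hx h1 h2 h3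
    refine ⟨D, hD1, hD2.trans ?_⟩
    have := hε' n
    linarith
  choose D hD1 hD2 using hDs
  have hcIcc : c ∈ Icc (0 : Fin d → ℝ) 1 := by
    constructor <;> (intro i; simp [hc]; try norm_num)
  refine ⟨c, ?_, isCompact_singleton, ?_, D, hD1, ?_⟩
  · have hball : ball c (1/2) ⊆ Icc (0 : Fin d → ℝ) 1 := by
      intro z hz
      rw [mem_ball] at hz
      have hzi : ∀ i, |z i - 1/2| < 1/2 := by
        intro i
        have h := (dist_le_pi_dist z c i).trans_lt hz
        rwa [Real.dist_eq] at h
      constructor <;> intro i <;>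
        [ (have := abs_lt.1 (hzi i); simp; linarith [this.1]);
          (have := abs_lt.1 (hzi i); simp; linarith [this.2]) ]
    exact interior_maximal hball isOpen_ball (mem_ball_self (by norm_num))
  · intro y hy
    rw [mem_singleton_iff] at hy
    subst hy
    exact hcIcc
  · refine squeeze_zero (fun n => hausdorffDist_nonneg) hD2 ?_
    exact tendsto_one_div_add_atTop_nhds_zero_nat
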